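/- Assume the Bessel bound Σ_j |V_φ g(λ_j)|² ≤ B‖g‖₂² for all g ∈ L²(ℝ), and that (1/r)Σ_{j=1}^r |V_φ p(λ_j)|² ≥ (⟨H_{Ω,φ}p,p⟩ − ν‖p‖₂²)/|Ω| for all p ∈ V_N, with α_N ≥ γ ≥ α_{N+1}, γ ∈ (0,1). Then for every f that is (ε,φ)-concentrated in Ω, Σ_{j=1}^r |V_φ f(λ_j)|² ≥ A‖f‖₂² with A = (r/|Ω|)(γ − γε/(1−γ) − ν) − 2B√(ε/(1−γ)). -/

import Mathlib

open MeasureTheory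
open scoped ComplexInnerProductSpace

lemma aux_summable {H : Type*} [NormedAddCommGroup H] [InnerProductSpace ℂ H] [CompleteSpace H]
    {ψ : ℕ → H} (hψ : Orthonormal ℂ ψ) (c : ℕ → ℂ) (hc : Summable fun k => ‖c k‖ ^ 2) :
    Summable fun k => c k • ψ k := by
  rw [summable_iff_vanishing_norm]
  intro ε hε
  obtain ⟨s, hs⟩ := summable_iff_vanishing_norm.1 hc (ε ^ 2) (by positivity)
  refine ⟨s, fun t ht => ?_⟩
  have h1 : ‖∑ k ∈ t, c k • ψ k‖ ^ 2 = ∑ k ∈ t, ‖c k‖ ^ 2 := by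
    have h2 := hψ.inner_sum c c t
    rw [← inner_self_eq_norm_sq (𝕜 := ℂ), h2, RCLike.re_to_complex, Complex.re_sum]
    refine Finset.sum_congr rfl fun k _ => ?_
    rw [mul_comm, Complex.mul_conj]
    rw [Complex.ofReal_re, Complex.normSq_eq_norm_sq]
  have h4 : ∑ k ∈ t, ‖c k‖ ^ 2 < ε ^ 2 := by
    have := hs t ht
    calc ∑ k ∈ t, ‖c k‖ ^ 2 ≤ ‖∑ k ∈ t, ‖c k‖ ^ 2‖ := le_abs_self _
    _ < ε ^ 2 := this
  nlinarith [norm_nonneg (∑ k ∈ t, c k • ψ k)]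

lemma aux_spec {H : Type*} [NormedAddCommGroup H] [InnerProductSpace ℂ H] [CompleteSpace H]
    {ψ : ℕ → H} (hψ : Orthonormal ℂ ψ)
    {α : ℕ → ℝ} (hα : ∀ k, 0 < α k ∧ α k ≤ 1)
    {T : H →L[ℂ] H}
    (hspec : ∀ f : H, T f = ∑' k, ((α k : ℂ) * ⟪ψ k, f⟫) • ψ k)
    (g : H) :
    HasSum (fun k => α k * ‖⟪ψ k, g⟫‖ ^ 2) ((⟪g, T g⟫ : ℂ)).re := by
  set c : ℕ → ℂ := fun k => (α k : ℂ) * ⟪ψ k, g⟫ with hc_def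
  have hc : Summable fun k => ‖c k‖ ^ 2 := by
    refine Summable.of_nonneg_of_le (fun k => by positivity) (fun k => ?_)
      (hψ.inner_products_summable g)
    have h1 : ‖c k‖ = |α k| * ‖⟪ψ k, g⟫‖ := by
      rw [hc_def]; simp [norm_mul, Complex.norm_real]
    rw [h1, abs_of_pos (hα k).1]
    have := (hα k).2
    have h2 := norm_nonneg (⟪ψ k, g⟫ : ℂ)
    have h3 : 0 < α k := (hα k).1
    have h4 : α k ^ 2 ≤ 1 := by nlinarith
    have h5 : (α k * ‖(⟪ψ k, g⟫ : ℂ)‖) ^ 2 = α k ^ 2 * ‖(⟪ψ k, g⟫ : ℂ)‖ ^ 2 := by ring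
    nlinarith [sq_nonneg (‖(⟪ψ k, g⟫ : ℂ)‖)]
  have hsum : HasSum (fun k => c k • ψ k) (T g) := by
    rw [hspec g]
    exact (aux_summable hψ c hc).hasSum
  have hsum2 : HasSum (fun k => (⟪g, c k • ψ k⟫ : ℂ)) (⟪g, T g⟫ : ℂ) :=
    hsum.mapL (innerSL ℂ g)
  have hsum3 := hsum2.mapL Complex.reCLM
  convert hsum3 using 2 with k
  rw [inner_smul_right, hc_def]
  simp only [Complex.reCLM_apply]
  have h5 : (⟪g, ψ k⟫ : ℂ) = starRingEnd ℂ (⟪ψ k, g⟫ : ℂ) := (inner_conj_symm _ _).symm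
  rw [h5, mul_assoc, Complex.mul_conj, Complex.normSq_eq_norm_sq,
    ← Complex.ofReal_mul, Complex.ofReal_re]
  exact (Complex.reCLM_apply _).symm

set_option maxHeartbeats 1000000 in
theorem stmt10
    {H : Type*} [NormedAddCommGroup H] [InnerProductSpace ℂ H] [CompleteSpace H]
    (φ : H) (hφ : ‖φ‖ = 1)
    (Ω : Set (ℝ × ℝ)) (hΩc : IsCompact Ω) (hΩ : 0 < (volume Ω).toReal)
    (ψ : ℕ → H) (hψ : Orthonormal ℂ ψ)
    (α : ℕ → ℝ) (hmono : Antitone α) (hα : ∀ k, 0 < α k ∧ α k ≤ 1)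
    (T : H →L[ℂ] H) (hsa : IsSelfAdjoint T)
    (hspec : ∀ f : H, T f = ∑' k, ((α k : ℂ) * ⟪ψ k, f⟫) • ψ k)
    (N : ℕ) (γ : ℝ) (hγ0 : 0 < γ) (hγ1 : γ < 1)
    (hγle : ∀ k < N, γ ≤ α k) (hαN : α N ≤ γ)
    (r : ℕ) (hr : 0 < r)
    (u : Fin r → H) (hu : ∀ j, ‖u j‖ = 1)     -- `u j = π(λ_j)φ`
    (B : ℝ) (hB : 0 ≤ B)
    (hBessel : ∀ g : H, ∑ j, ‖⟪u j, g⟫‖ ^ 2 ≤ B * ‖g‖ ^ 2)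
    (ν : ℝ) (hν : 0 ≤ ν)
    (hsamp : ∀ p ∈ Submodule.span ℂ (ψ '' Set.Iio N),
      ((⟪p, T p⟫).re - ν * ‖p‖ ^ 2) / (volume Ω).toReal
        ≤ (1 / r) * ∑ j, ‖⟪u j, p⟫‖ ^ 2)
    (ε : ℝ) (hε : 0 ≤ ε)
    (f : H) (hconc : (1 - ε) * ‖f‖ ^ 2 ≤ (⟪f, T f⟫).re) :
    (r / (volume Ω).toReal * (γ - γ * ε / (1 - γ) - ν)
        - 2 * B * Real.sqrt (ε / (1 - γ))) * ‖f‖ ^ 2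
      ≤ ∑ j, ‖⟪u j, f⟫‖ ^ 2 := by
  classical
  have h1γ : 0 < 1 - γ := by linarith
  set δ : ℝ := ε / (1 - γ) with hδ
  have hδ0 : 0 ≤ δ := div_nonneg hε h1γ.le
  set n2 : ℝ := ‖f‖ ^ 2 with hn2
  have hn20 : 0 ≤ n2 := sq_nonneg _
  set a : ℕ → ℂ := fun k => ⟪ψ k, f⟫ with ha
  set p : H := ∑ k ∈ Finset.range N, a k • ψ k with hp
  set h : H := f - p with hh
  clear_value δ n2 a p h
  -- inner products with p and h
  have hip : ∀ k, (⟪ψ k, p⟫ : ℂ) = if k ∈ Finset.range N then a k else 0 := by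
    intro k
    by_cases hk : k ∈ Finset.range N
    · rw [if_pos hk, hp]; exact hψ.inner_right_sum a hk
    · rw [if_neg hk, hp, inner_sum]
      refine Finset.sum_eq_zero fun i hi => ?_
      rw [inner_smul_right, orthonormal_iff_ite.mp hψ, if_neg (by rintro rfl; exact hk hi),
        mul_zero]
  have hih : ∀ k, (⟪ψ k, h⟫ : ℂ) = if k ∈ Finset.range N then 0 else a k := by
    intro k
    rw [hh, inner_sub_right, hip k]
    by_cases hk : k ∈ Finset.range N <;> simp [hk, ha]
  have hph0 : (⟪p, h⟫ : ℂ) = 0 := by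
    rw [hp, sum_inner]
    refine Finset.sum_eq_zero fun k hk => ?_
    rw [inner_smul_left, hih k, if_pos hk, mul_zero]
  have hfeq : f = p + h := by rw [hh]; abel
  have pyth : n2 = ‖p‖ ^ 2 + ‖h‖ ^ 2 := by
    have h6 := norm_add_sq (𝕜 := ℂ) p h
    rw [hph0] at h6
    simp only [map_zero, mul_zero, add_zero] at h6
    rw [hn2, hfeq, h6]
  have hp2 : ‖p‖ ^ 2 = ∑ k ∈ Finset.range N, ‖a k‖ ^ 2 := by
    rw [hp, ← inner_self_eq_norm_sq (𝕜 := ℂ), hψ.inner_sum a a, RCLike.re_to_complex,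
      Complex.re_sum]
    refine Finset.sum_congr rfl fun k _ => ?_
    rw [mul_comm, Complex.mul_conj, Complex.ofReal_re, Complex.normSq_eq_norm_sq]
  -- step: ‖h‖² ≤ δ * n2
  have hSf : HasSum (fun k => α k * ‖a k‖ ^ 2) ((⟪f, T f⟫ : ℂ)).re := by
    simpa [ha] using aux_spec hψ hα hspec f
  have hhb : Summable fun k => ‖(⟪ψ k, h⟫ : ℂ)‖ ^ 2 := hψ.inner_products_summable h
  have hfb : Summable fun k => ‖a k‖ ^ 2 := by
    simpa [ha] using hψ.inner_products_summable f
  set g : ℕ → ℝ := fun k =>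
    if k ∈ Finset.range N then ‖a k‖ ^ 2 else γ * ‖(⟪ψ k, h⟫ : ℂ)‖ ^ 2 with hg
  have hgle : ∀ k, α k * ‖a k‖ ^ 2 ≤ g k := by
    intro k
    simp only [hg]
    by_cases hk : k ∈ Finset.range N
    · rw [if_pos hk]
      have := (hα k).2
      nlinarith [sq_nonneg ‖a k‖, (hα k).1]
    · rw [if_neg hk]
      have hkN : N ≤ k := le_of_not_gt (fun hlt => hk (Finset.mem_range.mpr hlt))
      have hak : α k ≤ γ := le_trans (hmono hkN) hαN
      have h7 : (⟪ψ k, h⟫ : ℂ) = a k := by rw [hih k, if_neg hk]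
      rw [h7]
      nlinarith [sq_nonneg ‖a k‖, (hα k).1]
  have hgsum : Summable g := by
    refine Summable.of_nonneg_of_le (fun k => ?_) (fun k => ?_) (hfb.add (hhb.mul_left γ))
    · simp only [hg]; by_cases hk : k ∈ Finset.range N
      · rw [if_pos hk]; positivity
      · rw [if_neg hk]; positivity
    · simp only [hg]; by_cases hk : k ∈ Finset.range N
      · rw [if_pos hk]
        have : 0 ≤ γ * ‖(⟪ψ k, h⟫ : ℂ)‖ ^ 2 := by positivity
        linarith
      · rw [if_neg hk]
        have : 0 ≤ ‖a k‖ ^ 2 := by positivity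
        linarith
  have htsum_g : ∑' k, g k ≤ ‖p‖ ^ 2 + γ * ‖h‖ ^ 2 := by
    have hsplit := Summable.sum_add_tsum_compl (s := Finset.range N) hgsum
    rw [← hsplit]
    have h8 : ∑ k ∈ Finset.range N, g k = ‖p‖ ^ 2 := by
      rw [hp2]
      exact Finset.sum_congr rfl fun k hk => by simp only [hg]; rw [if_pos hk]
    have h9 : ∑' k : ↑((Finset.range N : Set ℕ))ᶜ, g k ≤ γ * ‖h‖ ^ 2 := by
      have h10 : ∀ k : ↑((Finset.range N : Set ℕ))ᶜ,
          g k = γ * ‖(⟪ψ (k : ℕ), h⟫ : ℂ)‖ ^ 2 := by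
        rintro ⟨k, hk⟩
        have hk' : k ∉ Finset.range N := by
          simpa using hk
        simp only [hg]; exact if_neg hk'
      rw [tsum_congr h10, tsum_mul_left]
      have h11 : ∑' k : ↑((Finset.range N : Set ℕ))ᶜ, ‖(⟪ψ (k : ℕ), h⟫ : ℂ)‖ ^ 2
          ≤ ∑' k, ‖(⟪ψ k, h⟫ : ℂ)‖ ^ 2 := by
        refine Summable.tsum_le_tsum_of_inj (fun k => (k : ℕ)) Subtype.coe_injective
          (fun c _ => by positivity) (fun k => le_refl _) (hhb.subtype _) hhb
      have h12 := hψ.tsum_inner_products_le h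
      nlinarith [hγ0]
    linarith [h8, h9, le_refl (0:ℝ)]
  have hhn : ‖h‖ ^ 2 ≤ δ * n2 := by
    have h13 : (⟪f, T f⟫ : ℂ).re ≤ ‖p‖ ^ 2 + γ * ‖h‖ ^ 2 := by
      rw [← hSf.tsum_eq]
      exact le_trans (hSf.summable.tsum_le_tsum hgle hgsum) htsum_g
    have h14 : (1 - ε) * n2 ≤ ‖p‖ ^ 2 + γ * ‖h‖ ^ 2 := le_trans hconc h13
    rw [hδ, div_mul_eq_mul_div, le_div_iff₀ h1γ]
    nlinarith [pyth]
  -- step: ⟪p, T p⟫.re ≥ γ‖p‖²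
  have hpTp : γ * ‖p‖ ^ 2 ≤ (⟪p, T p⟫ : ℂ).re := by
    have hSp := aux_spec hψ hα hspec p
    have he : (⟪p, T p⟫ : ℂ).re = ∑ k ∈ Finset.range N, α k * ‖(⟪ψ k, p⟫ : ℂ)‖ ^ 2 := by
      rw [← hSp.tsum_eq]
      exact tsum_eq_sum (fun k hk => by rw [hip k, if_neg hk]; simp)
    rw [he, hp2, Finset.mul_sum]
    refine Finset.sum_le_sum fun k hk => ?_
    have hke := hγle k (Finset.mem_range.mp hk)
    have h8 : (⟪ψ k, p⟫ : ℂ) = a k := by rw [hip k, if_pos hk]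
    rw [h8]
    exact mul_le_mul_of_nonneg_right hke (sq_nonneg _)
  -- p in span
  have hpspan : p ∈ Submodule.span ℂ (ψ '' Set.Iio N) := by
    rw [hp]
    refine Submodule.sum_mem _ fun k hk => Submodule.smul_mem _ _ (Submodule.subset_span ?_)
    exact ⟨k, Finset.mem_range.mp hk, rfl⟩
  -- sampling bound
  set V : ℝ := (volume Ω).toReal with hV
  set Sp : ℝ := ∑ j, ‖(⟪u j, p⟫ : ℂ)‖ ^ 2 with hSp_def
  set Sh : ℝ := ∑ j, ‖(⟪u j, h⟫ : ℂ)‖ ^ 2 with hSh_def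
  set Sf : ℝ := ∑ j, ‖(⟪u j, f⟫ : ℂ)‖ ^ 2 with hSf_def
  clear_value V Sp Sh Sf
  have hSp0 : 0 ≤ Sp := by
    rw [hSp_def]; exact Finset.sum_nonneg fun j _ => by positivity
  have hSh0 : 0 ≤ Sh := by
    rw [hSh_def]; exact Finset.sum_nonneg fun j _ => by positivity
  have hrR : (0:ℝ) < r := by exact_mod_cast hr
  have hkey : ((r : ℝ) / V) * ((γ - γ * δ - ν) * n2) ≤ Sp := by
    have hs := hsamp p hpspan
    rw [← hSp_def] at hs
    have hpn2 : ‖p‖ ^ 2 ≤ n2 := by nlinarith [sq_nonneg ‖h‖, pyth]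
    have hpn3 : (1 - δ) * n2 ≤ ‖p‖ ^ 2 := by nlinarith [pyth, hhn]
    have hineq : (γ - γ * δ - ν) * n2 ≤ (⟪p, T p⟫ : ℂ).re - ν * ‖p‖ ^ 2 := by
      have t1 : γ * ((1 - δ) * n2) ≤ γ * ‖p‖ ^ 2 :=
        mul_le_mul_of_nonneg_left hpn3 hγ0.le
      have t2 : ν * ‖p‖ ^ 2 ≤ ν * n2 := mul_le_mul_of_nonneg_left hpn2 hν
      nlinarith
    calc ((r : ℝ) / V) * ((γ - γ * δ - ν) * n2)
        ≤ ((r : ℝ) / V) * ((⟪p, T p⟫ : ℂ).re - ν * ‖p‖ ^ 2) :=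
          mul_le_mul_of_nonneg_left hineq (by positivity)
      _ = (r : ℝ) * (((⟪p, T p⟫ : ℂ).re - ν * ‖p‖ ^ 2) / V) := by ring
      _ ≤ (r : ℝ) * ((1 / (r : ℝ)) * Sp) := mul_le_mul_of_nonneg_left hs hrR.le
      _ = Sp := by field_simp
  -- Bessel bounds
  have hBp : Sp ≤ B * n2 := by
    have := hBessel p
    have hpn2 : ‖p‖ ^ 2 ≤ n2 := by nlinarith [sq_nonneg ‖h‖, pyth]
    nlinarith
  have hBh : Sh ≤ B * (δ * n2) := by
    have := hBessel h
    nlinarith [hhn]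
  -- pointwise lower bound for Sf
  set C : ℝ := ∑ j, ‖(⟪u j, p⟫ : ℂ)‖ * ‖(⟪u j, h⟫ : ℂ)‖ with hC_def
  clear_value C
  have hC0 : 0 ≤ C := by
    rw [hC_def]; exact Finset.sum_nonneg fun j _ => by positivity
  have hkey2 : Sp - 2 * C ≤ Sf := by
    rw [hSp_def, hSf_def, hC_def, Finset.mul_sum, ← Finset.sum_sub_distrib]
    refine Finset.sum_le_sum fun j _ => ?_
    have h9 : (⟪u j, p⟫ : ℂ) = ⟪u j, f⟫ - ⟪u j, h⟫ := by
      rw [hh, inner_sub_right]; ring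
    have htri : ‖(⟪u j, p⟫ : ℂ)‖ ≤ ‖(⟪u j, f⟫ : ℂ)‖ + ‖(⟪u j, h⟫ : ℂ)‖ := by
      rw [h9]; exact norm_sub_le _ _
    have hF := norm_nonneg (⟪u j, f⟫ : ℂ)
    have hHn := norm_nonneg (⟪u j, h⟫ : ℂ)
    have hPn := norm_nonneg (⟪u j, p⟫ : ℂ)
    by_cases hcase : ‖(⟪u j, h⟫ : ℂ)‖ ≤ ‖(⟪u j, p⟫ : ℂ)‖
    · have h10 : (0:ℝ) ≤ ‖(⟪u j, p⟫ : ℂ)‖ - ‖(⟪u j, h⟫ : ℂ)‖ := by linarith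
      have h11 := pow_le_pow_left₀ h10 (by linarith : ‖(⟪u j, p⟫ : ℂ)‖ - ‖(⟪u j, h⟫ : ℂ)‖ ≤ ‖(⟪u j, f⟫ : ℂ)‖) 2
      nlinarith
    · push_neg at hcase
      have h12 : ‖(⟪u j, p⟫ : ℂ)‖ * ‖(⟪u j, p⟫ : ℂ)‖ ≤ ‖(⟪u j, p⟫ : ℂ)‖ * ‖(⟪u j, h⟫ : ℂ)‖ :=
        mul_le_mul_of_nonneg_left hcase.le hPn
      nlinarith
  -- Cauchy-Schwarz bound on C
  have hCS : C ≤ B * Real.sqrt δ * n2 := by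
    have hcs := Finset.sum_mul_sq_le_sq_mul_sq Finset.univ
      (fun j => ‖(⟪u j, p⟫ : ℂ)‖) (fun j => ‖(⟪u j, h⟫ : ℂ)‖)
    have hC2 : C ^ 2 ≤ Sp * Sh := by
      rw [hC_def, hSp_def, hSh_def]
      exact hcs
    have hD0 : 0 ≤ B * Real.sqrt δ * n2 := by positivity
    have hD2 : Sp * Sh ≤ (B * Real.sqrt δ * n2) ^ 2 := by
      have hsq : Real.sqrt δ ^ 2 = δ := Real.sq_sqrt hδ0
      calc Sp * Sh ≤ B * n2 * (B * (δ * n2)) :=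
            mul_le_mul hBp hBh hSh0 (by positivity : (0:ℝ) ≤ B * n2)
        _ = B ^ 2 * Real.sqrt δ ^ 2 * n2 ^ 2 := by rw [hsq]; ring
        _ = (B * Real.sqrt δ * n2) ^ 2 := by ring
    have h13 := Real.sqrt_le_sqrt (le_trans hC2 hD2)
    rwa [Real.sqrt_sq hC0, Real.sqrt_sq hD0] at h13
  -- finish
  have hgoal : (↑r / V * (γ - γ * ε / (1 - γ) - ν) - 2 * B * Real.sqrt δ) * n2
      = ((r : ℝ) / V) * ((γ - γ * δ - ν) * n2) - 2 * (B * Real.sqrt δ * n2) := by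
    rw [hδ]; ring
  calc (↑r / V * (γ - γ * ε / (1 - γ) - ν) - 2 * B * Real.sqrt δ) * n2
      = ((r : ℝ) / V) * ((γ - γ * δ - ν) * n2) - 2 * (B * Real.sqrt δ * n2) := hgoal
    _ ≤ Sp - 2 * C := by linarith
    _ ≤ Sf := hkey2
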